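/- The dimension of the ℂ-linear span of the parity path tensors {ψ'(i,e) : i ∈ Fin d, e ∈ E^i} is at most |E| − Σ_{i ∈ Fin d} w i, where |E| = Σ_{i ∈ Fin d} w i · w (i+1). -/

import Mathlib

open scoped BigOperators

attribute [local instance] Classical.propDecidable

namespace ABP

variable {d : ℕ} [NeZero d]

/-- The set of edges in layer `i` of a (cyclic / trace) ABP of width format `w`:
an edge `(a, b)` goes from vertex `a` of layer `i` to vertex `b` of layer `i + 1`
(layer indices modulo `d`). -/
abbrev Edge (w : Fin d → ℕ) (i : Fin d) : Type := Fin (w i) × Fin (w (i + 1))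

/-- An edge tuple is a valid path if consecutive edges match (cyclically). -/
def ValidPath (w : Fin d → ℕ) (p : ∀ i : Fin d, Edge w i) : Prop :=
  ∀ i : Fin d, (p i).2 = (p (i + 1)).1

/-- An edge is parity preserving if its two endpoints have the same parity. -/
def ParityPres {w : Fin d → ℕ} {i : Fin d} (e : Edge w i) : Prop :=
  e.1.val % 2 = e.2.val % 2

/-- The number of parity-preserving edges of an edge tuple. -/
noncomputable def ppCount (w : Fin d → ℕ) (p : ∀ i : Fin d, Edge w i) : ℕ :=
  (Finset.univ.filter fun i : Fin d => ParityPres (p i)).card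

/-- The tensor `f_com`: value 1 on valid paths, 0 elsewhere. -/
noncomputable def fcom (w : Fin d → ℕ) : (∀ i : Fin d, Edge w i) → ℂ :=
  fun p => if ValidPath w p then 1 else 0

/-- The tensor `f_0`: value 1 on valid paths containing exactly one
parity-preserving edge, 0 elsewhere. -/
noncomputable def f0 (w : Fin d → ℕ) : (∀ i : Fin d, Edge w i) → ℂ :=
  fun p => if ValidPath w p ∧ ppCount w p = 1 then 1 else 0

/-- The action of a tuple of matrices `g i : E^i → E^i → ℂ` on a tensor:
`((⊗ᵢ gᵢ) f)(p) = Σ_q (Πᵢ gᵢ (p i) (q i)) · f q`. -/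
noncomputable def actT (w : Fin d → ℕ) (g : ∀ i : Fin d, Edge w i → Edge w i → ℂ)
    (f : (∀ i : Fin d, Edge w i) → ℂ) : (∀ i : Fin d, Edge w i) → ℂ :=
  fun p => ∑ q : ∀ i : Fin d, Edge w i, (∏ i : Fin d, g i (p i) (q i)) * f q

end ABP

namespace ABP

/-- The parity path tensor `ψ'(i,e)`: value 1 on valid paths containing exactly one
parity-preserving edge and whose `i`-th edge is `e`, 0 elsewhere. -/
noncomputable def psi' {d : ℕ} [NeZero d] (w : Fin d → ℕ) (i : Fin d) (e : Edge w i) :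
    (∀ i : Fin d, Edge w i) → ℂ :=
  fun p => if ValidPath w p ∧ ppCount w p = 1 ∧ p i = e then 1 else 0

end ABP

namespace ABPaux

open ABP

variable {d : ℕ} [NeZero d] (w : Fin d → ℕ)

abbrev Vert (w : Fin d → ℕ) : Type := Σ i : Fin d, Fin (w i)

/-- The incidence map. -/
noncomputable def B : (Vert w → ℂ) →ₗ[ℂ] ((Σ i : Fin d, Edge w i) → ℂ) where
  toFun φ := fun x => φ ⟨x.1, x.2.1⟩ - φ ⟨x.1 + 1, x.2.2⟩
  map_add' := by intros; funext x; simp; ring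
  map_smul' := by intros; funext x; simp; ring

/-- The parity relation vector. -/
noncomputable def c0 : (Σ i : Fin d, Edge w i) → ℂ :=
  fun x => (if x.1 = 0 then 1 else 0) - (if ParityPres x.2 then 1 else 0)

/-- Evaluation-along-a-path functional. -/
noncomputable def evalSum (sel : ∀ i : Fin d, Edge w i) : ((Σ i : Fin d, Edge w i) → ℂ) →ₗ[ℂ] ℂ where
  toFun x := ∑ i : Fin d, x ⟨i, sel i⟩
  map_add' := by intros; simp [Finset.sum_add_distrib]
  map_smul' := by intros; simp [Finset.mul_sum]

lemma telescope (φ : Vert w → ℂ) (p : ∀ i : Fin d, Edge w i)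
    (hp : ValidPath w p) :
    ∑ i : Fin d, (φ ⟨i, (p i).1⟩ - φ ⟨i + 1, (p i).2⟩) = 0 := by
  rw [Finset.sum_sub_distrib]
  have : ∑ i : Fin d, φ ⟨i + 1, (p i).2⟩ = ∑ i : Fin d, φ ⟨i, (p i).1⟩ := by
    exact Fintype.sum_equiv (Equiv.addRight (1 : Fin d)) _ _
      (fun i => by simp [Equiv.coe_addRight, hp i])
  rw [this, sub_self]

lemma sum_c0 (p : ∀ i : Fin d, Edge w i) :
    ∑ i : Fin d, c0 w ⟨i, p i⟩ = 1 - (ppCount w p : ℂ) := by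
  unfold c0 ppCount
  rw [Finset.sum_sub_distrib]
  rw [Finset.sum_ite_eq' Finset.univ (0 : Fin d) (fun _ => (1 : ℂ)), Finset.sum_boole]
  simp

lemma sum_mul_psi' (x : (Σ i : Fin d, Edge w i) → ℂ) (p : ∀ i : Fin d, Edge w i) :
    ∑ e : (Σ i : Fin d, Edge w i), x e * psi' w e.1 e.2 p
      = (if ValidPath w p ∧ ppCount w p = 1 then 1 else 0) * ∑ i : Fin d, x ⟨i, p i⟩ := by
  rw [← Finset.univ_sigma_univ, Finset.sum_sigma, Finset.mul_sum]
  refine Finset.sum_congr rfl fun i _ => ?_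
  by_cases h : ValidPath w p ∧ ppCount w p = 1
  · have h1 : ∀ e : Edge w i, psi' w i e p = if p i = e then 1 else 0 := by
      intro e
      unfold psi'
      by_cases he : p i = e <;> simp [h.1, h.2, he]
    simp only [h1, if_pos h, one_mul, mul_ite, mul_one, mul_zero]
    rw [Finset.sum_ite_eq Finset.univ (p i) (fun e => x ⟨i, e⟩)]
    simp
  · have h1 : ∀ e : Edge w i, psi' w i e p = 0 := by
      intro e
      unfold psi'
      rw [if_neg]
      tauto
    simp [h1, if_neg h]

end ABPaux

namespace ABPaux

open ABP

variable {d : ℕ} [NeZero d] (w : Fin d → ℕ)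

/-- vertex choice for the special path -/
def vf : ℕ → ℕ := fun k => if k ≤ 1 then 0 else k % 2

lemma vf_lt (hw : ∀ i, 2 ≤ w i) (i : Fin d) (k : ℕ) : vf k < w i := by
  have := hw i; unfold vf; split <;> omega

/-- The special valid path with exactly 3 parity preserving edges. -/
def p3 (hw : ∀ i, 2 ≤ w i) : ∀ i : Fin d, Edge w i :=
  fun i => (⟨vf i.val, vf_lt w hw i i.val⟩, ⟨vf ((i+1 : Fin d)).val, vf_lt w hw (i+1) _⟩)

lemma p3_valid (hw : ∀ i, 2 ≤ w i) : ValidPath w (p3 w hw) := fun _ => rfl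

lemma vf_key (hd3 : 3 ≤ d) (hodd : Odd d) (k : ℕ) (hk : k < d) :
    (vf k % 2 = vf ((k + 1) % d) % 2) ↔ (k = 0 ∨ k = 1 ∨ k = d - 1) := by
  have h1 : (k + 1) % d = if k + 1 = d then 0 else k + 1 := by
    split
    · simp [*]
    · exact Nat.mod_eq_of_lt (by omega)
  rw [h1]
  obtain ⟨m, hm⟩ := hodd
  unfold vf
  split_ifs <;> omega

lemma ppCount_p3 (hd3 : 3 ≤ d) (hodd : Odd d) (hw : ∀ i, 2 ≤ w i) :
    ppCount w (p3 w hw) = 3 := by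
  have h0 : (0 : ℕ) < d := by omega
  have h1 : (1 : ℕ) < d := by omega
  have h2 : d - 1 < d := by omega
  have hfilt : (Finset.univ.filter fun i : Fin d => ParityPres (p3 w hw i))
      = {⟨0, h0⟩, ⟨1, h1⟩, ⟨d - 1, h2⟩} := by
    ext i
    simp only [Finset.mem_filter, Finset.mem_univ, true_and, Finset.mem_insert,
      Finset.mem_singleton, Fin.ext_iff]
    have hv : (i + 1 : Fin d).val = (i.val + 1) % d := by
      rw [Fin.add_def]
      simp [Fin.val_one', Nat.mod_eq_of_lt h1]
    have : ParityPres (p3 w hw i) ↔ (vf i.val % 2 = vf ((i.val + 1) % d) % 2) := by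
      show vf i.val % 2 = vf ((i + 1 : Fin d)).val % 2 ↔ _
      rw [hv]
    rw [this, vf_key hd3 hodd i.val i.isLt]
  unfold ppCount
  rw [hfilt]
  rw [Finset.card_insert_of_notMem (by simp [Fin.ext_iff]; omega),
    Finset.card_insert_of_notMem (by simp [Fin.ext_iff]; omega),
    Finset.card_singleton]

end ABPaux

namespace ABPaux

open ABP

variable {d : ℕ} [NeZero d] (w : Fin d → ℕ)

open Fin.NatCast in
lemma kerB_le (hw : ∀ i, 2 ≤ w i) (φ : Vert w → ℂ) (hφ : B w φ = 0) :
    ∃ a : ℂ, φ = fun _ => a := by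
  have key : ∀ (i : Fin d) (a : Fin (w i)) (b : Fin (w (i + 1))),
      φ ⟨i, a⟩ = φ ⟨i + 1, b⟩ := by
    intro i a b
    have := congrFun hφ ⟨i, (a, b)⟩
    simpa [B, sub_eq_zero] using this
  set z : ∀ i : Fin d, Fin (w i) := fun i => ⟨0, by have := hw i; omega⟩ with hz
  have key2 : ∀ (i : Fin d) (a : Fin (w i)), φ ⟨i, a⟩ = φ ⟨i, z i⟩ := by
    intro i a
    rw [key i a (z (i + 1)), ← key i (z i) (z (i + 1))]
  have key3 : ∀ k : ℕ, φ ⟨(k : Fin d), z _⟩ = φ ⟨(0 : Fin d), z _⟩ := by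
    intro k
    induction k with
    | zero => rfl
    | succ n ih =>
      have hc : ((n + 1 : ℕ) : Fin d) = (n : ℕ) + 1 := by push_cast; ring
      rw [hc, ← key (n : Fin d) (z _) (z _), key2, ih]
  refine ⟨φ ⟨0, z 0⟩, funext fun v => ?_⟩
  obtain ⟨j, a⟩ := v
  rw [key2 j a]
  have hj : ((j.val : ℕ) : Fin d) = j := Fin.cast_val_eq_self j
  calc φ ⟨j, z j⟩ = φ ⟨((j.val : ℕ) : Fin d), z _⟩ := by rw [hj]
    _ = φ ⟨(0 : Fin d), z _⟩ := key3 j.val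

lemma mem_ker_T (y : (Σ i : Fin d, Edge w i) → ℂ)
    (hy : ∀ p, ValidPath w p → ppCount w p = 1 → ∑ i : Fin d, y ⟨i, p i⟩ = 0) :
    y ∈ LinearMap.ker
      ((Fintype.linearCombination ℂ) (fun x : (Σ i : Fin d, Edge w i) => psi' w x.1 x.2)) := by
  rw [LinearMap.mem_ker]
  funext p
  rw [Fintype.linearCombination_apply]
  show (∑ e : (Σ i : Fin d, Edge w i), y e • psi' w e.1 e.2) p = 0
  rw [Finset.sum_apply]
  simp only [Pi.smul_apply, smul_eq_mul]
  rw [sum_mul_psi']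
  by_cases h : ValidPath w p ∧ ppCount w p = 1
  · rw [if_pos h, hy p h.1 h.2, mul_zero]
  · rw [if_neg h, zero_mul]

lemma ker_T_dim (hd3 : 3 ≤ d) (hodd : Odd d) (hw : ∀ i, 2 ≤ w i) :
    (∑ i : Fin d, w i) ≤ Module.finrank ℂ (LinearMap.ker
      ((Fintype.linearCombination ℂ) (fun x : (Σ i : Fin d, Edge w i) => psi' w x.1 x.2))) := by
  set T := (Fintype.linearCombination ℂ) (fun x : (Σ i : Fin d, Edge w i) => psi' w x.1 x.2) with hT
  set S1 := LinearMap.range (B w) with hS1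
  set S2 := (ℂ ∙ c0 w : Submodule ℂ ((Σ i : Fin d, Edge w i) → ℂ)) with hS2
  set L := evalSum w (p3 w hw) with hL
  have hLB : ∀ φ : Vert w → ℂ, L (B w φ) = 0 := by
    intro φ
    show ∑ i : Fin d, (φ ⟨i, (p3 w hw i).1⟩ - φ ⟨i + 1, (p3 w hw i).2⟩) = 0
    exact telescope w φ _ (p3_valid w hw)
  have hLc : L (c0 w) = -2 := by
    show ∑ i : Fin d, c0 w ⟨i, p3 w hw i⟩ = -2
    rw [sum_c0, ppCount_p3 w hd3 hodd hw]
    norm_num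
  have hc0ne : c0 w ≠ 0 := by
    intro h
    rw [h, map_zero] at hLc
    norm_num at hLc
  have hS1T : S1 ≤ LinearMap.ker T := by
    rintro _ ⟨φ, rfl⟩
    exact mem_ker_T w _ (fun p hp _ => telescope w φ p hp)
  have hS2T : S2 ≤ LinearMap.ker T := by
    rw [hS2, Submodule.span_singleton_le_iff_mem]
    refine mem_ker_T w _ (fun p _ hpc => ?_)
    rw [sum_c0, hpc]
    norm_num
  have hsub : S1 ⊔ S2 ≤ LinearMap.ker T := sup_le hS1T hS2T
  have hinf : S1 ⊓ S2 = ⊥ := by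
    rw [eq_bot_iff]
    rintro x ⟨hx1, hx2⟩
    rw [SetLike.mem_coe, hS2, Submodule.mem_span_singleton] at hx2
    obtain ⟨a, rfl⟩ := hx2
    obtain ⟨φ, hφ⟩ := hx1
    have h0 : L (a • c0 w) = 0 := by rw [← hφ]; exact hLB φ
    rw [map_smul, hLc, smul_eq_mul] at h0
    have ha : a = 0 := by
      rcases mul_eq_zero.mp h0 with h | h
      · exact h
      · norm_num at h
    simp [ha]
  have hS2d : Module.finrank ℂ S2 = 1 := finrank_span_singleton hc0ne
  have hS1d : (∑ i : Fin d, w i) ≤ Module.finrank ℂ S1 + 1 := by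
    have h1 := LinearMap.finrank_range_add_finrank_ker (B w)
    have hdv : Module.finrank ℂ (Vert w → ℂ) = ∑ i : Fin d, w i := by
      rw [Module.finrank_fintype_fun_eq_card, Fintype.card_sigma]
      simp
    have hone : (fun _ => (1 : ℂ) : Vert w → ℂ) ≠ 0 := by
      intro h
      have := congrFun h ⟨0, ⟨0, by have := hw 0; omega⟩⟩
      simpa using this
    have hkb : Module.finrank ℂ (LinearMap.ker (B w)) ≤ 1 := by
      have hle : LinearMap.ker (B w) ≤ (ℂ ∙ (fun _ => (1 : ℂ) : Vert w → ℂ)) := by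
        intro φ hφ
        obtain ⟨a, rfl⟩ := kerB_le w hw φ hφ
        rw [Submodule.mem_span_singleton]
        exact ⟨a, by funext; simp⟩
      calc Module.finrank ℂ (LinearMap.ker (B w))
          ≤ Module.finrank ℂ (ℂ ∙ (fun _ => (1 : ℂ) : Vert w → ℂ)) :=
            Submodule.finrank_mono hle
        _ = 1 := finrank_span_singleton hone
    rw [hdv, ← hS1] at h1
    omega
  have hsupinf := Submodule.finrank_sup_add_finrank_inf_eq S1 S2
  rw [hinf, hS2d] at hsupinf
  have hbot : Module.finrank ℂ (⊥ : Submodule ℂ ((Σ i : Fin d, Edge w i) → ℂ)) = 0 := finrank_bot ℂ _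
  have hm := Submodule.finrank_mono hsub
  omega

end ABPaux


/-- The dimension of the span of the parity path tensors
`{ψ'(i,e)}` is at most `|E| − Σᵢ w i`, where `|E| = Σᵢ w i · w (i+1)`. -/
theorem psi'_span_dim_le (d : ℕ) [NeZero d] (hd3 : 3 ≤ d) (hodd : Odd d)
    (w : Fin d → ℕ) (hw : ∀ i, 2 ≤ w i) :
    Module.finrank ℂ (Submodule.span ℂ
        (Set.range fun x : Σ i : Fin d, ABP.Edge w i => ABP.psi' w x.1 x.2)) ≤
      (∑ i : Fin d, w i * w (i + 1)) - (∑ i : Fin d, w i) := by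
  rw [← Fintype.range_linearCombination ℂ
    (fun x : Σ i : Fin d, ABP.Edge w i => ABP.psi' w x.1 x.2)]
  have hrn := LinearMap.finrank_range_add_finrank_ker
    ((Fintype.linearCombination ℂ) (fun x : Σ i : Fin d, ABP.Edge w i => ABP.psi' w x.1 x.2))
  have hdom : Module.finrank ℂ ((Σ i : Fin d, ABP.Edge w i) → ℂ)
      = ∑ i : Fin d, w i * w (i + 1) := by
    rw [Module.finrank_fintype_fun_eq_card, Fintype.card_sigma]
    simp
  have hker := ABPaux.ker_T_dim w hd3 hodd hw
  rw [hdom] at hrn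
  omega
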